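/- For any k ≥ 1 there is a constant C_k ≥ 1 with the following property. Suppose V, V' ⊂ B are subspaces of dimension k and A : V → V' is an invertible linear map (the restriction of a bounded operator on B). Let V = E ⊕ F and V' = E' ⊕ F' be splittings with A(E) = E' and A(F) = F', and set q = dim E. Then α(E', F')^q / C_k ≤ det(A|V) / ( det(A|E) · det(A|F) ) ≤ C_k / α(E, F)^q. -/

import Mathlib

open MeasureTheory Filter Metric Module Submodule Set

noncomputable section

namespace BY

variable {B B' : Type*}

/-- The unit sphere of a subspace `E`. -/
def subSphere [NormedAddCommGroup B] [NormedSpace ℝ B] (E : Submodule ℝ B) : Set B :=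
  {v : B | v ∈ E ∧ ‖v‖ = 1}

/-- `d_H(E, E')`: the Hausdorff distance between the unit spheres of `E` and `E'`. -/
def dH [NormedAddCommGroup B] [NormedSpace ℝ B] (E E' : Submodule ℝ B) : ℝ :=
  Metric.hausdorffDist (subSphere E) (subSphere E')

/-- The supremum of `‖π x‖` over `x ∈ S`, where `π` is the projection onto `E` along `F`. -/
def projNormOn [NormedAddCommGroup B] [NormedSpace ℝ B] (E F : Submodule ℝ B)
    (h : IsCompl E F) (S : Set B) : ℝ :=
  sSup ((fun x => ‖(E.linearProjOfIsCompl F h x : B)‖) '' S)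

/-- `|π_{E⊕F}|`: the operator norm of the projection onto `E` along `F`. -/
def projNorm [NormedAddCommGroup B] [NormedSpace ℝ B] (E F : Submodule ℝ B)
    (h : IsCompl E F) : ℝ :=
  projNormOn E F h (Metric.closedBall 0 1)

/-- `α(E, F) = inf { ‖e - f‖ : e ∈ E, ‖e‖ = 1, f ∈ F }`. -/
def alphaAngle [NormedAddCommGroup B] [NormedSpace ℝ B] (E F : Submodule ℝ B) : ℝ :=
  sInf {r : ℝ | ∃ e ∈ E, ∃ f ∈ F, ‖e‖ = 1 ∧ r = ‖e - f‖}

/-- `ω_k`: the volume of the Euclidean unit ball in `ℝ^k`. -/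
def euclideanBallVol (k : ℕ) : ENNReal :=
  volume (Metric.closedBall (0 : EuclideanSpace ℝ (Fin k)) 1)

/-- `μ` is the induced volume `m_E` on the `k`-dimensional subspace `E`: the (unique) Haar
measure on `E` assigning mass `ω_k` to the unit ball of `E`. -/
def IsInducedVolume [NormedAddCommGroup B] [NormedSpace ℝ B] [MeasurableSpace B]
    (E : Submodule ℝ B) (k : ℕ) (μ : Measure E) : Prop :=
  Measure.IsAddHaarMeasure μ ∧ μ {v : E | ‖v‖ ≤ 1} = euclideanBallVol k

/-- `det(A|E)`, computed with respect to induced volumes `μE` on `E` and `μF` on a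
subspace `F` containing `A(E)`: the ratio `μF(A(B_E)) / μE(B_E)` where `B_E` is
the unit ball of `E`. -/
def detIn [NormedAddCommGroup B] [NormedSpace ℝ B] [NormedAddCommGroup B'] [NormedSpace ℝ B']
    [MeasurableSpace B] [MeasurableSpace B']
    (A : B →L[ℝ] B') (E : Submodule ℝ B) (F : Submodule ℝ B')
    (μE : Measure E) (μF : Measure F) : ℝ :=
  (μF {w : F | ∃ v : B, v ∈ E ∧ ‖v‖ ≤ 1 ∧ A v = (w : B')}).toReal /
    (μE {v : E | ‖v‖ ≤ 1}).toReal

/-- `P[v₁, …, v_k]`: the parallelepiped spanned by the vectors `v i`. -/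
def pped [AddCommGroup B] [Module ℝ B] {k : ℕ} (v : Fin k → B) : Set B :=
  {x : B | ∃ a : Fin k → ℝ, (∀ i, a i ∈ Set.Icc (0 : ℝ) 1) ∧ x = ∑ i, a i • v i}

/-- `N[v₁, …, v_k]`: the sum of the norms of the projections, within the span of the `v i`,
onto each `⟨v i⟩` along the span of the other basis vectors. -/
def Nquan [NormedAddCommGroup B] [NormedSpace ℝ B] {k : ℕ} (v : Fin k → B) : ℝ :=
  ∑ i, sSup {r : ℝ | ∃ a : Fin k → ℝ, ‖∑ j, a j • v j‖ ≤ 1 ∧ r = ‖a i • v i‖}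

/-- The operator norm of the restriction of `A` to the subspace `E`. -/
def opNormOnSub [NormedAddCommGroup B] [NormedSpace ℝ B] [NormedAddCommGroup B']
    [NormedSpace ℝ B'] (A : B →L[ℝ] B') (E : Submodule ℝ B) : ℝ :=
  sSup {r : ℝ | ∃ v ∈ E, ‖v‖ ≤ 1 ∧ r = ‖A v‖}

/-- The `n`-th iterate (`n ∈ ℤ`) of the invertible pair `(f, g)`, `g = f⁻¹`. -/
def zIter {X : Type*} (f g : X → X) (n : ℤ) (x : X) : X :=
  if 0 ≤ n then f^[n.toNat] x else g^[(-n).toNat] x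

/-- `ψ'(x) = sup_{n ∈ ℤ} e^{-|n| δ} ψ(f^n x)`. -/
def psiSup {X : Type*} (f g : X → X) (ψ : X → ℝ) (δ : ℝ) (x : X) : ℝ :=
  sSup (Set.range fun n : ℤ => Real.exp (-|(n : ℝ)| * δ) * ψ (zIter f g n x))

/-- The cocycle `T^n_x = T_{f^{n-1} x} ∘ ⋯ ∘ T_x`. -/
def cocycle {X : Type*} [NormedAddCommGroup B] [NormedSpace ℝ B]
    (f : X → X) (T : X → B →L[ℝ] B) : ℕ → X → B →L[ℝ] B
  | 0, _ => ContinuousLinearMap.id ℝ B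
  | n + 1, x => (cocycle f T n (f x)).comp (T x)

end BY

end

noncomputable section S7Aux
open scoped NNReal ENNReal
set_option linter.unusedSectionVars false
set_option maxHeartbeats 1000000

namespace S7

lemma euclideanBallVol_pos (k : ℕ) : 0 < BY.euclideanBallVol k :=
  measure_closedBall_pos volume (0 : EuclideanSpace ℝ (Fin k)) one_pos

lemma euclideanBallVol_ne_top (k : ℕ) : BY.euclideanBallVol k ≠ ⊤ :=
  measure_closedBall_lt_top.ne

lemma haar_normBall {X : Type*} [NormedAddCommGroup X] [NormedSpace ℝ X] [MeasurableSpace X]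
    [BorelSpace X] [FiniteDimensional ℝ X] (μ : Measure X) [μ.IsAddHaarMeasure]
    {r : ℝ} (hr : 0 ≤ r) :
    μ {x : X | ‖x‖ ≤ r} = ENNReal.ofReal (r ^ finrank ℝ X) * μ {x : X | ‖x‖ ≤ 1} := by
  have h1 : {x : X | ‖x‖ ≤ r} = closedBall 0 r := by
    ext x; simp [mem_closedBall_zero_iff]
  have h2 : {x : X | ‖x‖ ≤ 1} = closedBall 0 1 := by
    ext x; simp [mem_closedBall_zero_iff]
  rw [h1, h2, Measure.addHaar_closedBall' μ 0 hr]

variable {B : Type*} [NormedAddCommGroup B] [NormedSpace ℝ B] [CompleteSpace B]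
  [MeasurableSpace B] [BorelSpace B]

lemma alphaSet_bddBelow (E F : Submodule ℝ B) :
    BddBelow {r : ℝ | ∃ e ∈ E, ∃ f ∈ F, ‖e‖ = 1 ∧ r = ‖e - f‖} :=
  ⟨0, fun _ ⟨_, _, _, _, _, hr⟩ => hr ▸ norm_nonneg _⟩

lemma alpha_le_norm (E F : Submodule ℝ B) {e f : B} (he : e ∈ E) (hf : f ∈ F)
    (hne : ‖e‖ = 1) : BY.alphaAngle E F ≤ ‖e - f‖ :=
  csInf_le (alphaSet_bddBelow E F) ⟨e, he, f, hf, hne, rfl⟩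

lemma exists_norm_one (E : Submodule ℝ B) (hE : E ≠ ⊥) : ∃ e ∈ E, ‖e‖ = (1:ℝ) := by
  obtain ⟨x, hxE, hx0⟩ := Submodule.exists_mem_ne_zero_of_ne_bot hE
  refine ⟨‖x‖⁻¹ • x, E.smul_mem _ hxE, ?_⟩
  rw [norm_smul, norm_inv, norm_norm, inv_mul_cancel₀ (norm_ne_zero_iff.2 hx0)]

lemma alpha_bot (F : Submodule ℝ B) : BY.alphaAngle (⊥ : Submodule ℝ B) F = 0 := by
  have h : {r : ℝ | ∃ e ∈ (⊥ : Submodule ℝ B), ∃ f ∈ F, ‖e‖ = 1 ∧ r = ‖e - f‖} = ∅ := by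
    ext r; simp only [Set.mem_setOf_eq, Submodule.mem_bot, Set.mem_empty_iff_false, iff_false]
    rintro ⟨e, rfl, f, _, h1, _⟩; simp at h1
  rw [BY.alphaAngle, h, Real.sInf_empty]

lemma alpha_nonneg (E F : Submodule ℝ B) : 0 ≤ BY.alphaAngle E F := by
  rcases eq_or_ne E ⊥ with rfl | hE
  · rw [alpha_bot]
  · exact le_csInf (by
      obtain ⟨e, he, hne⟩ := exists_norm_one E hE
      exact ⟨‖e - 0‖, e, he, 0, F.zero_mem, hne, rfl⟩)
      (fun r ⟨e, _, f, _, _, hr⟩ => hr ▸ norm_nonneg _)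

lemma alpha_mul_norm_le (E F : Submodule ℝ B) {e f : B} (he : e ∈ E) (hf : f ∈ F) :
    BY.alphaAngle E F * ‖e‖ ≤ ‖e + f‖ := by
  rcases eq_or_ne e 0 with rfl | he0
  · simp
  · have hn : (0:ℝ) < ‖e‖ := norm_pos_iff.2 he0
    have h1 : ‖(‖e‖⁻¹ • e : B)‖ = 1 := by
      rw [norm_smul, norm_inv, norm_norm, inv_mul_cancel₀ hn.ne']
    have h3 := alpha_le_norm E F (E.smul_mem ‖e‖⁻¹ he) (F.smul_mem (-‖e‖⁻¹) hf) h1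
    have h2 : (‖e‖⁻¹ • e : B) - (-‖e‖⁻¹) • f = ‖e‖⁻¹ • (e + f) := by module
    rw [h2, norm_smul, norm_inv, norm_norm] at h3
    calc BY.alphaAngle E F * ‖e‖ ≤ ‖e‖⁻¹ * ‖e + f‖ * ‖e‖ :=
          mul_le_mul_of_nonneg_right h3 hn.le
      _ = ‖e + f‖ := by field_simp

lemma alpha_pos (E F : Submodule ℝ B) [FiniteDimensional ℝ E] [FiniteDimensional ℝ F]
    (hEF : E ⊓ F = ⊥) (hE : E ≠ ⊥) : 0 < BY.alphaAngle E F := by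
  have hFclosed : IsClosed (F : Set B) := F.closed_of_finiteDimensional
  set S : Set B := (E : Set B) ∩ Metric.sphere 0 1 with hS
  have hScl : IsClosed S := E.closed_of_finiteDimensional.inter isClosed_sphere
  have hSK : IsCompact S := by
    have hK : IsCompact ((Subtype.val : E → B) '' Metric.closedBall 0 1) :=
      (isCompact_closedBall (0 : E) 1).image continuous_subtype_val
    refine hK.of_isClosed_subset hScl ?_
    rintro x ⟨hxE, hx1⟩
    exact ⟨⟨x, hxE⟩, by
      simpa [Metric.mem_closedBall, dist_zero_right] using
        le_of_eq (mem_sphere_zero_iff_norm.1 hx1), rfl⟩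
  obtain ⟨e0, he0, hne0⟩ := exists_norm_one E hE
  have hSne : S.Nonempty := ⟨e0, he0, by simpa [mem_sphere_zero_iff_norm] using hne0⟩
  obtain ⟨x0, hx0S, hmin⟩ := hSK.exists_isMinOn hSne
    (Metric.continuous_infDist_pt (F : Set B)).continuousOn
  have hx1 : ‖x0‖ = 1 := mem_sphere_zero_iff_norm.1 hx0S.2
  have hx0F : x0 ∉ (F : Set B) := by
    intro hxF
    have hbot : x0 ∈ E ⊓ F := ⟨hx0S.1, hxF⟩
    rw [hEF, Submodule.mem_bot] at hbot
    rw [hbot] at hx1; simp at hx1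
  have hdel : 0 < Metric.infDist x0 (F : Set B) :=
    (hFclosed.notMem_iff_infDist_pos ⟨0, F.zero_mem⟩).1 hx0F
  refine lt_of_lt_of_le hdel (le_csInf ?_ ?_)
  · exact ⟨‖e0 - 0‖, e0, he0, 0, F.zero_mem, hne0, rfl⟩
  · rintro rr ⟨e, he, f, hf, hne, rfl⟩
    have heS : e ∈ S := ⟨he, by simpa [mem_sphere_zero_iff_norm] using hne⟩
    calc Metric.infDist x0 (F : Set B) ≤ Metric.infDist e (F : Set B) := hmin heS
      _ ≤ dist e f := Metric.infDist_le_dist_of_mem hf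
      _ = ‖e - f‖ := dist_eq_norm e f

lemma measurable_sumSet (E F : Submodule ℝ B) [FiniteDimensional ℝ E] [FiniteDimensional ℝ F] :
    MeasurableSet {p : E × F | ‖(p.1 : B) + (p.2 : B)‖ ≤ 1} :=
  (isClosed_le (by fun_prop) continuous_const).measurableSet

lemma prod_lower (E F : Submodule ℝ B) [FiniteDimensional ℝ E] [FiniteDimensional ℝ F]
    (μE : Measure E) (μF : Measure F) [μE.IsAddHaarMeasure] [μF.IsAddHaarMeasure] :
    ENNReal.ofReal ((2⁻¹:ℝ) ^ finrank ℝ E) * μE {x : E | ‖x‖ ≤ 1} *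
      (ENNReal.ofReal ((2⁻¹:ℝ) ^ finrank ℝ F) * μF {x : F | ‖x‖ ≤ 1}) ≤
    (μE.prod μF) {p : E × F | ‖(p.1 : B) + (p.2 : B)‖ ≤ 1} := by
  have hsub : {x : E | ‖x‖ ≤ 2⁻¹} ×ˢ {y : F | ‖y‖ ≤ 2⁻¹} ⊆
      {p : E × F | ‖(p.1 : B) + (p.2 : B)‖ ≤ 1} := by
    rintro ⟨x, y⟩ ⟨hx, hy⟩
    simp only [Set.mem_setOf_eq] at hx hy ⊢
    calc ‖(x : B) + y‖ ≤ ‖(x : B)‖ + ‖(y : B)‖ := norm_add_le _ _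
      _ ≤ 2⁻¹ + 2⁻¹ := add_le_add hx hy
      _ = 1 := by norm_num
  calc ENNReal.ofReal ((2⁻¹:ℝ) ^ finrank ℝ E) * μE {x : E | ‖x‖ ≤ 1} *
        (ENNReal.ofReal ((2⁻¹:ℝ) ^ finrank ℝ F) * μF {x : F | ‖x‖ ≤ 1})
      = μE {x : E | ‖x‖ ≤ 2⁻¹} * μF {y : F | ‖y‖ ≤ 2⁻¹} := by
        rw [haar_normBall μE (by norm_num : (0:ℝ) ≤ 2⁻¹),
          haar_normBall μF (by norm_num : (0:ℝ) ≤ 2⁻¹)]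
    _ = (μE.prod μF) ({x : E | ‖x‖ ≤ 2⁻¹} ×ˢ {y : F | ‖y‖ ≤ 2⁻¹}) :=
        (Measure.prod_prod _ _).symm
    _ ≤ _ := measure_mono hsub

lemma prod_upper (E F : Submodule ℝ B) [FiniteDimensional ℝ E] [FiniteDimensional ℝ F]
    (μE : Measure E) (μF : Measure F) [μE.IsAddHaarMeasure] [μF.IsAddHaarMeasure]
    (ρ : ℝ) (hρ : 0 ≤ ρ)
    (hcont : ∀ (e : E) (f : F), ‖(e : B) + f‖ ≤ 1 → ‖(e : B)‖ ≤ ρ) :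
    (μE.prod μF) {p : E × F | ‖(p.1 : B) + (p.2 : B)‖ ≤ 1} ≤
      ENNReal.ofReal (ρ ^ finrank ℝ E) * μE {x : E | ‖x‖ ≤ 1} *
        (ENNReal.ofReal ((2:ℝ) ^ finrank ℝ F) * μF {x : F | ‖x‖ ≤ 1}) := by
  set S := {p : E × F | ‖(p.1 : B) + (p.2 : B)‖ ≤ 1} with hSdef
  set c : ℝ≥0∞ := ENNReal.ofReal ((2:ℝ) ^ finrank ℝ F) * μF {x : F | ‖x‖ ≤ 1} with hc
  rw [Measure.prod_apply (measurable_sumSet E F)]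
  have hbound : ∀ e : E, μF (Prod.mk e ⁻¹' S) ≤
      (Metric.closedBall (0:E) ρ).indicator (fun _ => c) e := by
    intro e
    rcases eq_empty_or_nonempty (Prod.mk e ⁻¹' S) with hemp | ⟨f₀, hf₀⟩
    · simp [hemp]
    · have heρ : e ∈ Metric.closedBall (0:E) ρ := by
        rw [Metric.mem_closedBall, dist_zero_right]
        exact hcont e f₀ hf₀
      rw [Set.indicator_of_mem heρ]
      have hsub2 : Prod.mk e ⁻¹' S ⊆ Metric.closedBall f₀ 2 := by
        intro f hf
        rw [Metric.mem_closedBall, dist_eq_norm]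
        have heq : (f : B) - f₀ = ((e : B) + f) - ((e : B) + f₀) := by abel
        show ‖(f : B) - (f₀ : B)‖ ≤ 2
        rw [heq]
        calc ‖((e:B) + f) - ((e:B) + f₀)‖ ≤ ‖(e:B) + f‖ + ‖(e:B) + f₀‖ := norm_sub_le _ _
          _ ≤ 1 + 1 := add_le_add hf hf₀
          _ = 2 := by norm_num
      calc μF (Prod.mk e ⁻¹' S) ≤ μF (Metric.closedBall f₀ 2) := measure_mono hsub2
        _ = ENNReal.ofReal ((2:ℝ) ^ finrank ℝ F) * μF (Metric.closedBall 0 1) :=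
            Measure.addHaar_closedBall' μF f₀ (by norm_num)
        _ = c := by
            rw [hc]; congr 1
            congr 1; ext x; simp [mem_closedBall_zero_iff]
  calc ∫⁻ e, μF (Prod.mk e ⁻¹' S) ∂μE
      ≤ ∫⁻ e, (Metric.closedBall (0:E) ρ).indicator (fun _ => c) e ∂μE :=
        lintegral_mono hbound
    _ = c * μE (Metric.closedBall (0:E) ρ) := by
        rw [lintegral_indicator measurableSet_closedBall]
        simp [lintegral_const, Measure.restrict_apply, Set.univ_inter]
    _ = c * (ENNReal.ofReal (ρ ^ finrank ℝ E) * μE (Metric.closedBall 0 1)) := by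
        rw [Measure.addHaar_closedBall' μE 0 hρ]
    _ = ENNReal.ofReal (ρ ^ finrank ℝ E) * μE {x : E | ‖x‖ ≤ 1} *
        (ENNReal.ofReal ((2:ℝ) ^ finrank ℝ F) * μF {x : F | ‖x‖ ≤ 1}) := by
        have h2 : Metric.closedBall (0:E) 1 = {x : E | ‖x‖ ≤ 1} := by
          ext x; simp [mem_closedBall_zero_iff]
        rw [h2, hc]; ring

lemma exists_equiv (A : B →L[ℝ] B) (E E' : Submodule ℝ B) [FiniteDimensional ℝ E]
    (h : E.map (A : B →ₗ[ℝ] B) = E') (hinj : ∀ v ∈ E, A v = 0 → v = 0) :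
    ∃ T : E ≃L[ℝ] E', ∀ x : E, (T x : B) = A x := by
  have hmem : ∀ x ∈ E, (A : B →ₗ[ℝ] B) x ∈ E' := fun x hx => h ▸ Submodule.mem_map_of_mem hx
  set φ : E →ₗ[ℝ] E' := LinearMap.restrict (A : B →ₗ[ℝ] B) hmem with hφ
  have hb : Function.Bijective φ := by
    constructor
    · intro x y hxy
      have h5 := congrArg (Subtype.val) hxy
      simp only [hφ, LinearMap.restrict_apply] at h5
      have h0 : A ((x : B) - y) = 0 := by
        rw [map_sub]
        simpa [sub_eq_zero] using h5
      have h6 := hinj ((x:B) - y) (E.sub_mem x.2 y.2) h0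
      exact Subtype.ext (by rwa [sub_eq_zero] at h6)
    · rintro ⟨w, hw⟩
      rw [← h] at hw
      obtain ⟨v, hv, rfl⟩ := hw
      exact ⟨⟨v, hv⟩, rfl⟩
  have hfd : FiniteDimensional ℝ E' := by
    rw [← h]; exact Module.Finite.map E (A : B →ₗ[ℝ] B)
  exact ⟨(LinearEquiv.ofBijective φ hb).toContinuousLinearEquiv, fun x => rfl⟩

lemma exists_sum_equiv (E F V : Submodule ℝ B) [FiniteDimensional ℝ E] [FiniteDimensional ℝ F]
    [FiniteDimensional ℝ V] (hEV : E ≤ V) (hFV : F ≤ V) (hsup : E ⊔ F = V) (hinf : E ⊓ F = ⊥) :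
    ∃ σ : (E × F) ≃L[ℝ] V, ∀ p : E × F, (σ p : B) = (p.1 : B) + p.2 := by
  set ψ : (E × F) →ₗ[ℝ] V :=
    { toFun := fun p => ⟨(p.1 : B) + p.2, V.add_mem (hEV p.1.2) (hFV p.2.2)⟩
      map_add' := by intro p q; ext; simp; abel
      map_smul' := by intro c p; ext; simp [smul_add] } with hψ
  have hb : Function.Bijective ψ := by
    constructor
    · rintro ⟨e1, f1⟩ ⟨e2, f2⟩ hq
      have h0 : (e1 : B) + f1 = (e2 : B) + f2 := congrArg Subtype.val hq
      have h1 : (e1 : B) - e2 = f2 - f1 := by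
        rw [sub_eq_sub_iff_add_eq_add, h0]; abel
      have hmem : (e1 : B) - e2 ∈ E ⊓ F := by
        constructor
        · exact E.sub_mem e1.2 e2.2
        · rw [h1]; exact F.sub_mem f2.2 f1.2
      rw [hinf, Submodule.mem_bot, sub_eq_zero] at hmem
      have hf : (f1 : B) = f2 := by
        have h2 := h1; rw [hmem, sub_self] at h2
        have h3 := h2.symm; rw [sub_eq_zero] at h3; exact h3.symm
      exact Prod.ext (Subtype.ext hmem) (Subtype.ext hf)
    · rintro ⟨v, hv⟩
      rw [← hsup] at hv
      obtain ⟨e, he, f, hf, hef⟩ := Submodule.mem_sup.1 hv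
      exact ⟨(⟨e, he⟩, ⟨f, hf⟩), Subtype.ext hef⟩
  exact ⟨(LinearEquiv.ofBijective ψ hb).toContinuousLinearEquiv, fun p => rfl⟩

end S7
end S7Aux

open scoped NNReal ENNReal

set_option maxHeartbeats 2000000 in
/-- Lemma 2.10 of the paper. For any `k ≥ 1` there is a constant
`C_k ≥ 1` with the following property. If `V, V' ⊆ B` have dimension `k`, `A` is a bounded
operator mapping `V` bijectively onto `V'`, and `V = E ⊕ F`, `V' = E' ⊕ F'` are splittings
with `A(E) = E'`, `A(F) = F'`, `q = dim E`, then
`α(E', F')^q / C_k ≤ det(A|V) / (det(A|E) det(A|F)) ≤ C_k / α(E, F)^q`. -/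
theorem statement7 {B : Type*} [NormedAddCommGroup B] [NormedSpace ℝ B] [CompleteSpace B]
    [MeasurableSpace B] [BorelSpace B] (k : ℕ) (hk : 1 ≤ k) :
    ∃ C : ℝ, 1 ≤ C ∧
      ∀ (A : B →L[ℝ] B) (V V' E F E' F' : Submodule ℝ B) (q : ℕ)
        [FiniteDimensional ℝ V] [FiniteDimensional ℝ V']
        [FiniteDimensional ℝ E] [FiniteDimensional ℝ F]
        [FiniteDimensional ℝ E'] [FiniteDimensional ℝ F'],
        Module.finrank ℝ V = k → Module.finrank ℝ V' = k →
        V.map A.toLinearMap = V' → (∀ v ∈ V, A v = 0 → v = 0) →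
        E ≤ V → F ≤ V → E ⊔ F = V → E ⊓ F = ⊥ →
        E.map A.toLinearMap = E' → F.map A.toLinearMap = F' →
        Module.finrank ℝ E = q → q ≤ k → Module.finrank ℝ F = k - q →
        ∀ (μV : MeasureTheory.Measure V) (μV' : MeasureTheory.Measure V')
          (μE : MeasureTheory.Measure E) (μE' : MeasureTheory.Measure E')
          (μF : MeasureTheory.Measure F) (μF' : MeasureTheory.Measure F'),
          BY.IsInducedVolume V k μV → BY.IsInducedVolume V' k μV' →
          BY.IsInducedVolume E q μE → BY.IsInducedVolume E' q μE' →
          BY.IsInducedVolume F (k - q) μF → BY.IsInducedVolume F' (k - q) μF' →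
          BY.alphaAngle E' F' ^ q / C ≤
              BY.detIn A V V' μV μV' / (BY.detIn A E E' μE μE' * BY.detIn A F F' μF μF') ∧
            BY.detIn A V V' μV μV' / (BY.detIn A E E' μE μE' * BY.detIn A F F' μF μF') ≤
              C / BY.alphaAngle E F ^ q := by
  classical
  refine ⟨(4:ℝ) ^ k, one_le_pow₀ (by norm_num), ?_⟩
  intro A V V' E F E' F' q _ _ _ _ _ _ hVk hV'k hmapV hinjV hEV hFV hsup hinf hmapE hmapF
    hEq hqk hFr μV μV' μE μE' μF μF' hIV hIV' hIE hIE' hIF hIF'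
  haveI := hIV.1; haveI := hIV'.1; haveI := hIE.1; haveI := hIE'.1
  haveI := hIF.1; haveI := hIF'.1
  set r : ℕ := k - q with hrdef
  -- subspace relations for the image splitting
  have hE'le : E' ≤ V' := by rw [← hmapE, ← hmapV]; exact Submodule.map_mono hEV
  have hF'le : F' ≤ V' := by rw [← hmapF, ← hmapV]; exact Submodule.map_mono hFV
  have hsup' : E' ⊔ F' = V' := by rw [← hmapE, ← hmapF, ← Submodule.map_sup, hsup, hmapV]
  have hinjE : ∀ v ∈ E, A v = 0 → v = 0 := fun v hv => hinjV v (hEV hv)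
  have hinjF : ∀ v ∈ F, A v = 0 → v = 0 := fun v hv => hinjV v (hFV hv)
  have hinf' : E' ⊓ F' = ⊥ := by
    rw [Submodule.eq_bot_iff]
    rintro x ⟨hxE', hxF'⟩
    rw [← hmapE] at hxE'; rw [← hmapF] at hxF'
    obtain ⟨e, he, hex⟩ := hxE'
    obtain ⟨f, hf, hfx⟩ := hxF'
    have h0 : A (e - f) = 0 := by
      have h00 : (A.toLinearMap) e = (A.toLinearMap) f := by rw [hex, hfx]
      simpa [map_sub, sub_eq_zero] using h00
    have hef : e = f := by
      have h1 := hinjV (e - f) (V.sub_mem (hEV he) (hFV hf)) h0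
      rwa [sub_eq_zero] at h1
    have h2 : e ∈ E ⊓ F := ⟨he, hef ▸ hf⟩
    rw [hinf, Submodule.mem_bot] at h2
    rw [← hex, h2]; simp
  -- the restricted equivalences
  obtain ⟨TV, hTV⟩ := S7.exists_equiv A V V' hmapV hinjV
  obtain ⟨TE, hTE⟩ := S7.exists_equiv A E E' hmapE hinjE
  obtain ⟨TF, hTF⟩ := S7.exists_equiv A F F' hmapF hinjF
  obtain ⟨σ, hσ⟩ := S7.exists_sum_equiv E F V hEV hFV hsup hinf
  obtain ⟨σ', hσ'⟩ := S7.exists_sum_equiv E' F' V' hE'le hF'le hsup' hinf'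
  have hE'q : Module.finrank ℝ E' = q := by rw [← hEq]; exact (TE.toLinearEquiv.finrank_eq).symm
  have hF'r : Module.finrank ℝ F' = r := by rw [← hFr]; exact (TF.toLinearEquiv.finrank_eq).symm
  -- basic measurable sets
  have hBVm : MeasurableSet {v : V | ‖v‖ ≤ 1} :=
    (isClosed_le continuous_norm continuous_const).measurableSet
  have hBV'm : MeasurableSet {v : V' | ‖v‖ ≤ 1} :=
    (isClosed_le continuous_norm continuous_const).measurableSet
  have hBEm : MeasurableSet {v : E | ‖v‖ ≤ 1} :=
    (isClosed_le continuous_norm continuous_const).measurableSet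
  have hBFm : MeasurableSet {v : F | ‖v‖ ≤ 1} :=
    (isClosed_le continuous_norm continuous_const).measurableSet
  set S : Set (E × F) := {p : E × F | ‖(p.1 : B) + (p.2 : B)‖ ≤ 1} with hSdef
  set S' : Set (E' × F') := {p : E' × F' | ‖(p.1 : B) + (p.2 : B)‖ ≤ 1} with hS'def
  have hSm : MeasurableSet S := S7.measurable_sumSet E F
  have hS'm : MeasurableSet S' := S7.measurable_sumSet E' F'
  have hSpre : (σ : E × F → V) ⁻¹' {v : V | ‖v‖ ≤ 1} = S := by
    ext p
    show ‖(σ p : B)‖ ≤ 1 ↔ ‖(p.1 : B) + (p.2 : B)‖ ≤ 1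
    rw [hσ p]
  have hS'pre : (σ' : E' × F' → V') ⁻¹' {v : V' | ‖v‖ ≤ 1} = S' := by
    ext p
    show ‖(σ' p : B)‖ ≤ 1 ↔ ‖(p.1 : B) + (p.2 : B)‖ ≤ 1
    rw [hσ' p]
  set a : ℝ≥0∞ := (μE.prod μF) S with hadef
  set a' : ℝ≥0∞ := (μE'.prod μF') S' with ha'def
  -- Haar instances
  haveI : (μE.prod μF).IsAddHaarMeasure := Measure.prod.instIsAddHaarMeasure μE μF
  haveI : (μE'.prod μF').IsAddHaarMeasure := Measure.prod.instIsAddHaarMeasure μE' μF'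
  set ν : Measure V := (μE.prod μF).map σ with hνdef
  set ν' : Measure V' := (μE'.prod μF').map σ' with hν'def
  haveI : ν.IsAddHaarMeasure := σ.isAddHaarMeasure_map (μE.prod μF)
  haveI : ν'.IsAddHaarMeasure := σ'.isAddHaarMeasure_map (μE'.prod μF')
  haveI : (μE.map TE).IsAddHaarMeasure := TE.isAddHaarMeasure_map μE
  haveI : (μF.map TF).IsAddHaarMeasure := TF.isAddHaarMeasure_map μF
  set κ : Measure (E' × F') := (μE.map TE).prod (μF.map TF) with hκdef
  haveI : κ.IsAddHaarMeasure := Measure.prod.instIsAddHaarMeasure _ _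
  -- uniqueness of Haar measures: the three scalar factors
  obtain ⟨c, hc⟩ : ∃ c : ℝ≥0, μV = c • ν := ⟨_, Measure.isAddLeftInvariant_eq_smul μV ν⟩
  obtain ⟨c', hc'⟩ : ∃ c' : ℝ≥0, μV' = c' • ν' := ⟨_, Measure.isAddLeftInvariant_eq_smul μV' ν'⟩
  obtain ⟨u, hu⟩ : ∃ u : ℝ≥0, μE'.prod μF' = u • κ :=
    ⟨_, Measure.isAddLeftInvariant_eq_smul _ _⟩
  have hνBV : ν {v : V | ‖v‖ ≤ 1} = a := by
    rw [hνdef, Measure.map_apply σ.continuous.measurable hBVm, hSpre]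
  have hν'BV : ν' {v : V' | ‖v‖ ≤ 1} = a' := by
    rw [hν'def, Measure.map_apply σ'.continuous.measurable hBV'm, hS'pre]
  have h2 : BY.euclideanBallVol k = (c' : ℝ≥0∞) * a' := by
    rw [← hIV'.2, hc', Measure.smul_apply, hν'BV, ENNReal.smul_def, smul_eq_mul]
  -- the image sets
  set WE : Set E' := (TE.symm : E' → E) ⁻¹' {v : E | ‖v‖ ≤ 1} with hWEdef
  set WF : Set F' := (TF.symm : F' → F) ⁻¹' {v : F | ‖v‖ ≤ 1} with hWFdef
  set WV : Set V' := (TV.symm : V' → V) ⁻¹' {v : V | ‖v‖ ≤ 1} with hWVdef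
  have hWEm : MeasurableSet WE := hBEm.preimage TE.symm.continuous.measurable
  have hWFm : MeasurableSet WF := hBFm.preimage TF.symm.continuous.measurable
  have hWVm : MeasurableSet WV := hBVm.preimage TV.symm.continuous.measurable
  have hmapWE : (μE.map TE) WE = BY.euclideanBallVol q := by
    rw [Measure.map_apply TE.continuous.measurable hWEm]
    have hpre : (TE : E → E') ⁻¹' WE = {v : E | ‖v‖ ≤ 1} := by
      ext x
      show TE.symm (TE x) ∈ {v : E | ‖v‖ ≤ 1} ↔ _
      rw [TE.symm_apply_apply]
    rw [hpre, hIE.2]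
  have hmapWF : (μF.map TF) WF = BY.euclideanBallVol r := by
    rw [Measure.map_apply TF.continuous.measurable hWFm]
    have hpre : (TF : F → F') ⁻¹' WF = {v : F | ‖v‖ ≤ 1} := by
      ext x
      show TF.symm (TF x) ∈ {v : F | ‖v‖ ≤ 1} ↔ _
      rw [TF.symm_apply_apply]
    rw [hpre, hIF.2]
  have h3 : μE' WE * μF' WF = (u : ℝ≥0∞) * (BY.euclideanBallVol q * BY.euclideanBallVol r) := by
    calc μE' WE * μF' WF = (μE'.prod μF') (WE ×ˢ WF) := (Measure.prod_prod _ _).symm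
      _ = (u • κ) (WE ×ˢ WF) := by rw [← hu]
      _ = (u : ℝ≥0∞) * ((μE.map TE) WE * (μF.map TF) WF) := by
          rw [Measure.smul_apply, hκdef, Measure.prod_prod, ENNReal.smul_def, smul_eq_mul]
      _ = _ := by rw [hmapWE, hmapWF]
  -- the key commutation
  have hcomm : ∀ p : E × F, TV (σ p) = σ' (TE p.1, TF p.2) := by
    intro p
    apply Subtype.ext
    rw [hTV (σ p), hσ p, hσ' (TE p.1, TF p.2)]
    show A ((p.1 : B) + (p.2 : B)) = (TE p.1 : B) + (TF p.2 : B)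
    rw [map_add, hTE p.1, hTF p.2]
  have hWVpre : (σ' : E' × F' → V') ⁻¹' WV = (Prod.map (TE.symm) (TF.symm)) ⁻¹' S := by
    ext y
    have hyy : σ' y = TV (σ (TE.symm y.1, TF.symm y.2)) := by
      rw [hcomm (TE.symm y.1, TF.symm y.2)]
      simp only [ContinuousLinearEquiv.apply_symm_apply]
    show TV.symm (σ' y) ∈ {v : V | ‖v‖ ≤ 1} ↔ _
    rw [hyy, TV.symm_apply_apply]
    exact Set.ext_iff.1 hSpre (TE.symm y.1, TF.symm y.2)
  have hκpre : κ ((Prod.map (TE.symm : E' → E) (TF.symm : F' → F)) ⁻¹' S) = a := by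
    have hmes : MeasurableSet ((Prod.map (TE.symm : E' → E) (TF.symm : F' → F)) ⁻¹' S) :=
      hSm.preimage ((TE.symm.continuous.prodMap TF.symm.continuous).measurable)
    rw [hκdef, Measure.map_prod_map _ _ TE.continuous.measurable TF.continuous.measurable,
      Measure.map_apply ((TE.continuous.prodMap TF.continuous).measurable) hmes]
    have hid : (Prod.map (TE : E → E') (TF : F → F')) ⁻¹'
        ((Prod.map (TE.symm : E' → E) (TF.symm : F' → F)) ⁻¹' S) = S := by
      ext p
      show (TE.symm (TE p.1), TF.symm (TF p.2)) ∈ S ↔ p ∈ S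
      rw [TE.symm_apply_apply, TF.symm_apply_apply]
    rw [hid]
  have hν'WV : ν' WV = (u : ℝ≥0∞) * a := by
    rw [hν'def, Measure.map_apply σ'.continuous.measurable hWVm, hWVpre, hu,
      Measure.smul_apply, hκpre, ENNReal.smul_def, smul_eq_mul]
  have h4 : μV' WV = (c' : ℝ≥0∞) * ((u : ℝ≥0∞) * a) := by
    rw [hc', Measure.smul_apply, hν'WV, ENNReal.smul_def, smul_eq_mul]
  -- identification of the detIn sets
  have hsetV : {w : V' | ∃ v : B, v ∈ V ∧ ‖v‖ ≤ 1 ∧ A v = (w : B)} = WV := by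
    ext w
    constructor
    · rintro ⟨v, hvV, hv1, hAv⟩
      show TV.symm w ∈ {v : V | ‖v‖ ≤ 1}
      have hw : TV ⟨v, hvV⟩ = w := Subtype.ext (by rw [hTV]; exact hAv)
      rw [← hw, TV.symm_apply_apply]
      exact hv1
    · intro hw
      refine ⟨(TV.symm w : B), (TV.symm w).2, hw, ?_⟩
      rw [← hTV (TV.symm w), TV.apply_symm_apply]
  have hsetE : {w : E' | ∃ v : B, v ∈ E ∧ ‖v‖ ≤ 1 ∧ A v = (w : B)} = WE := by
    ext w
    constructor
    · rintro ⟨v, hvE, hv1, hAv⟩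
      show TE.symm w ∈ {v : E | ‖v‖ ≤ 1}
      have hw : TE ⟨v, hvE⟩ = w := Subtype.ext (by rw [hTE]; exact hAv)
      rw [← hw, TE.symm_apply_apply]
      exact hv1
    · intro hw
      refine ⟨(TE.symm w : B), (TE.symm w).2, hw, ?_⟩
      rw [← hTE (TE.symm w), TE.apply_symm_apply]
  have hsetF : {w : F' | ∃ v : B, v ∈ F ∧ ‖v‖ ≤ 1 ∧ A v = (w : B)} = WF := by
    ext w
    constructor
    · rintro ⟨v, hvF, hv1, hAv⟩
      show TF.symm w ∈ {v : F | ‖v‖ ≤ 1}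
      have hw : TF ⟨v, hvF⟩ = w := Subtype.ext (by rw [hTF]; exact hAv)
      rw [← hw, TF.symm_apply_apply]
      exact hv1
    · intro hw
      refine ⟨(TF.symm w : B), (TF.symm w).2, hw, ?_⟩
      rw [← hTF (TF.symm w), TF.apply_symm_apply]
  have hdV : BY.detIn A V V' μV μV' =
      (μV' WV).toReal / (BY.euclideanBallVol k).toReal := by
    rw [BY.detIn, hsetV, hIV.2]
  have hdE : BY.detIn A E E' μE μE' =
      (μE' WE).toReal / (BY.euclideanBallVol q).toReal := by
    rw [BY.detIn, hsetE, hIE.2]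
  have hdF : BY.detIn A F F' μF μF' =
      (μF' WF).toReal / (BY.euclideanBallVol r).toReal := by
    rw [BY.detIn, hsetF, hIF.2]
  -- positivity and finiteness
  have hωqpos := S7.euclideanBallVol_pos q
  have hωrpos := S7.euclideanBallVol_pos r
  have hωkpos := S7.euclideanBallVol_pos k
  have hωqtop := S7.euclideanBallVol_ne_top q
  have hωrtop := S7.euclideanBallVol_ne_top r
  have hωktop := S7.euclideanBallVol_ne_top k
  have hBVK : IsCompact {v : V | ‖v‖ ≤ 1} := by
    have hb : {v : V | ‖v‖ ≤ 1} = Metric.closedBall 0 1 := by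
      ext x; simp [Metric.mem_closedBall, dist_zero_right]
    rw [hb]; exact isCompact_closedBall _ _
  have hBV'K : IsCompact {v : V' | ‖v‖ ≤ 1} := by
    have hb : {v : V' | ‖v‖ ≤ 1} = Metric.closedBall 0 1 := by
      ext x; simp [Metric.mem_closedBall, dist_zero_right]
    rw [hb]; exact isCompact_closedBall _ _
  have hBEK : IsCompact {v : E | ‖v‖ ≤ 1} := by
    have hb : {v : E | ‖v‖ ≤ 1} = Metric.closedBall 0 1 := by
      ext x; simp [Metric.mem_closedBall, dist_zero_right]
    rw [hb]; exact isCompact_closedBall _ _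
  have hBFK : IsCompact {v : F | ‖v‖ ≤ 1} := by
    have hb : {v : F | ‖v‖ ≤ 1} = Metric.closedBall 0 1 := by
      ext x; simp [Metric.mem_closedBall, dist_zero_right]
    rw [hb]; exact isCompact_closedBall _ _
  have haT : a ≠ ⊤ := by
    have hSK : IsCompact S := by
      have himg : S = (σ.symm : V → E × F) '' {v : V | ‖v‖ ≤ 1} := by
        rw [← hSpre, σ.symm.image_eq_preimage_symm]
        simp
      rw [himg]
      exact hBVK.image σ.symm.continuous
    exact hSK.measure_lt_top.ne
  have ha'T : a' ≠ ⊤ := by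
    have hSK : IsCompact S' := by
      have himg : S' = (σ'.symm : V' → E' × F') '' {v : V' | ‖v‖ ≤ 1} := by
        rw [← hS'pre, σ'.symm.image_eq_preimage_symm]
        simp
      rw [himg]
      exact hBV'K.image σ'.symm.continuous
    exact hSK.measure_lt_top.ne
  have hlowa : ENNReal.ofReal ((2⁻¹:ℝ) ^ q) * BY.euclideanBallVol q *
      (ENNReal.ofReal ((2⁻¹:ℝ) ^ r) * BY.euclideanBallVol r) ≤ a := by
    have hlow := S7.prod_lower E F μE μF
    rw [hIE.2, hIF.2, hEq, hFr, ← hSdef, ← hadef] at hlow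
    exact hlow
  have hlowa' : ENNReal.ofReal ((2⁻¹:ℝ) ^ q) * BY.euclideanBallVol q *
      (ENNReal.ofReal ((2⁻¹:ℝ) ^ r) * BY.euclideanBallVol r) ≤ a' := by
    have hlow := S7.prod_lower E' F' μE' μF'
    rw [hIE'.2, hIF'.2, hE'q, hF'r, ← hS'def, ← ha'def] at hlow
    exact hlow
  have hlowpos : 0 < ENNReal.ofReal ((2⁻¹:ℝ) ^ q) * BY.euclideanBallVol q *
      (ENNReal.ofReal ((2⁻¹:ℝ) ^ r) * BY.euclideanBallVol r) := by
    apply ENNReal.mul_pos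
    · exact (ENNReal.mul_pos (ENNReal.ofReal_pos.2 (by positivity)).ne' hωqpos.ne').ne'
    · exact (ENNReal.mul_pos (ENNReal.ofReal_pos.2 (by positivity)).ne' hωrpos.ne').ne'
  have ha0 : a ≠ 0 := (lt_of_lt_of_le hlowpos hlowa).ne'
  have ha'0 : a' ≠ 0 := (lt_of_lt_of_le hlowpos hlowa').ne'
  have hWEpos : 0 < μE' WE := by
    have hopen : IsOpen {y : E' | ‖(TE.symm y : E)‖ < 1} :=
      isOpen_lt (continuous_norm.comp TE.symm.continuous) continuous_const
    have hne : {y : E' | ‖(TE.symm y : E)‖ < 1}.Nonempty := ⟨0, by simp⟩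
    have hsub : {y : E' | ‖(TE.symm y : E)‖ < 1} ⊆ WE := by
      intro y hy
      simp only [Set.mem_setOf_eq] at hy
      show TE.symm y ∈ {v : E | ‖v‖ ≤ 1}
      exact le_of_lt hy
    exact (hopen.measure_pos μE' hne).trans_le (measure_mono hsub)
  have hWFpos : 0 < μF' WF := by
    have hopen : IsOpen {y : F' | ‖(TF.symm y : F)‖ < 1} :=
      isOpen_lt (continuous_norm.comp TF.symm.continuous) continuous_const
    have hne : {y : F' | ‖(TF.symm y : F)‖ < 1}.Nonempty := ⟨0, by simp⟩
    have hsub : {y : F' | ‖(TF.symm y : F)‖ < 1} ⊆ WF := by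
      intro y hy
      simp only [Set.mem_setOf_eq] at hy
      show TF.symm y ∈ {v : F | ‖v‖ ≤ 1}
      exact le_of_lt hy
    exact (hopen.measure_pos μF' hne).trans_le (measure_mono hsub)
  have hWEfin : μE' WE ≠ ⊤ := by
    have hK : IsCompact WE := by
      have himg : WE = (TE : E → E') '' {v : E | ‖v‖ ≤ 1} := (TE.image_eq_preimage_symm _).symm
      rw [himg]; exact hBEK.image TE.continuous
    exact hK.measure_lt_top.ne
  have hWFfin : μF' WF ≠ ⊤ := by
    have hK : IsCompact WF := by
      have himg : WF = (TF : F → F') '' {v : F | ‖v‖ ≤ 1} := (TF.image_eq_preimage_symm _).symm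
      rw [himg]; exact hBFK.image TF.continuous
    exact hK.measure_lt_top.ne
  -- real versions
  have haR : 0 < a.toReal := ENNReal.toReal_pos ha0 haT
  have ha'R : 0 < a'.toReal := ENNReal.toReal_pos ha'0 ha'T
  have hWq : 0 < (BY.euclideanBallVol q).toReal := ENNReal.toReal_pos hωqpos.ne' hωqtop
  have hWr : 0 < (BY.euclideanBallVol r).toReal := ENNReal.toReal_pos hωrpos.ne' hωrtop
  have hWk : 0 < (BY.euclideanBallVol k).toReal := ENNReal.toReal_pos hωkpos.ne' hωktop
  have hY : 0 < (μE' WE).toReal := ENNReal.toReal_pos hWEpos.ne' hWEfin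
  have hZ : 0 < (μF' WF).toReal := ENNReal.toReal_pos hWFpos.ne' hWFfin
  have e2 : (BY.euclideanBallVol k).toReal = (c' : ℝ) * a'.toReal := by
    rw [h2, ENNReal.toReal_mul, ENNReal.coe_toReal]
  have e3R : (μE' WE).toReal * (μF' WF).toReal =
      (u : ℝ) * ((BY.euclideanBallVol q).toReal * (BY.euclideanBallVol r).toReal) := by
    have h9 := congrArg ENNReal.toReal h3
    rwa [ENNReal.toReal_mul, ENNReal.toReal_mul, ENNReal.toReal_mul, ENNReal.coe_toReal] at h9
  have e4R : (μV' WV).toReal = (c' : ℝ) * ((u : ℝ) * a.toReal) := by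
    have h9 := congrArg ENNReal.toReal h4
    rwa [ENNReal.toReal_mul, ENNReal.toReal_mul, ENNReal.coe_toReal, ENNReal.coe_toReal] at h9
  have hcc : 0 < (c' : ℝ) := by
    rcases mul_pos_iff.1 (e2 ▸ hWk) with ⟨h, _⟩ | ⟨_, h2'⟩
    · exact h
    · linarith
  have huu : 0 < (u : ℝ) := by
    have hYZ : 0 < (μE' WE).toReal * (μF' WF).toReal := mul_pos hY hZ
    rcases mul_pos_iff.1 (e3R ▸ hYZ) with ⟨h, _⟩ | ⟨_, h2'⟩
    · exact h
    · nlinarith [mul_pos hWq hWr]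
  have hprodEq : ((μE' WE).toReal / (BY.euclideanBallVol q).toReal) *
      ((μF' WF).toReal / (BY.euclideanBallVol r).toReal) = (u : ℝ) := by
    rw [div_mul_div_comm, e3R]
    field_simp
  have hR : BY.detIn A V V' μV μV' / (BY.detIn A E E' μE μE' * BY.detIn A F F' μF μF')
      = a.toReal / a'.toReal := by
    rw [hdV, hdE, hdF, hprodEq, e4R, e2]
    field_simp [hcc.ne', huu.ne', ha'R.ne']
  -- the quantities ρ, ρ' controlling the norm of the E-component
  have hαEF0 : 0 ≤ BY.alphaAngle E F := S7.alpha_nonneg E F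
  have hαEF'0 : 0 ≤ BY.alphaAngle E' F' := S7.alpha_nonneg E' F'
  obtain ⟨ρ, hρ0, hρcont, hρα⟩ : ∃ ρ : ℝ, 0 ≤ ρ ∧
      (∀ (e : E) (f : F), ‖(e : B) + f‖ ≤ 1 → ‖(e : B)‖ ≤ ρ) ∧
      ρ ^ q * BY.alphaAngle E F ^ q = 1 := by
    rcases eq_or_ne q 0 with hq0 | hq0
    · refine ⟨1, zero_le_one, ?_, by rw [hq0]; simp⟩
      intro e f _
      have hEbot : E = ⊥ := by
        rw [hq0] at hEq; exact Submodule.finrank_eq_zero.1 hEq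
      have hmem : (e : B) ∈ (⊥ : Submodule ℝ B) := by rw [← hEbot]; exact e.2
      rw [Submodule.mem_bot] at hmem
      rw [hmem]; simp
    · have hEbot : E ≠ ⊥ := by
        intro hbot; rw [hbot, finrank_bot] at hEq; exact hq0 hEq.symm
      have hαpos : 0 < BY.alphaAngle E F := S7.alpha_pos E F hinf hEbot
      refine ⟨(BY.alphaAngle E F)⁻¹, (inv_pos.2 hαpos).le, ?_, ?_⟩
      · intro e f hef
        have h5 := S7.alpha_mul_norm_le E F e.2 f.2
        have h6 : BY.alphaAngle E F * ‖(e : B)‖ ≤ BY.alphaAngle E F * (BY.alphaAngle E F)⁻¹ := by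
          rw [mul_inv_cancel₀ hαpos.ne']
          exact le_trans h5 hef
        exact le_of_mul_le_mul_left h6 hαpos
      · rw [← mul_pow, inv_mul_cancel₀ hαpos.ne', one_pow]
  obtain ⟨ρ', hρ'0, hρ'cont, hρ'α⟩ : ∃ ρ' : ℝ, 0 ≤ ρ' ∧
      (∀ (e : E') (f : F'), ‖(e : B) + f‖ ≤ 1 → ‖(e : B)‖ ≤ ρ') ∧
      ρ' ^ q * BY.alphaAngle E' F' ^ q = 1 := by
    rcases eq_or_ne q 0 with hq0 | hq0
    · refine ⟨1, zero_le_one, ?_, by rw [hq0]; simp⟩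
      intro e f _
      have hEbot : E' = ⊥ := by
        rw [hq0] at hE'q; exact Submodule.finrank_eq_zero.1 hE'q
      have hmem : (e : B) ∈ (⊥ : Submodule ℝ B) := by rw [← hEbot]; exact e.2
      rw [Submodule.mem_bot] at hmem
      rw [hmem]; simp
    · have hEbot : E' ≠ ⊥ := by
        intro hbot; rw [hbot, finrank_bot] at hE'q; exact hq0 hE'q.symm
      have hαpos : 0 < BY.alphaAngle E' F' := S7.alpha_pos E' F' hinf' hEbot
      refine ⟨(BY.alphaAngle E' F')⁻¹, (inv_pos.2 hαpos).le, ?_, ?_⟩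
      · intro e f hef
        have h5 := S7.alpha_mul_norm_le E' F' e.2 f.2
        have h6 : BY.alphaAngle E' F' * ‖(e : B)‖ ≤
            BY.alphaAngle E' F' * (BY.alphaAngle E' F')⁻¹ := by
          rw [mul_inv_cancel₀ hαpos.ne']
          exact le_trans h5 hef
        exact le_of_mul_le_mul_left h6 hαpos
      · rw [← mul_pow, inv_mul_cancel₀ hαpos.ne', one_pow]
  -- upper bounds (real)
  have hupaR : a.toReal * BY.alphaAngle E F ^ q ≤
      (BY.euclideanBallVol q).toReal * ((2:ℝ) ^ r * (BY.euclideanBallVol r).toReal) := by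
    have h7 := S7.prod_upper E F μE μF ρ hρ0 hρcont
    rw [hIE.2, hIF.2, hEq, hFr, ← hSdef, ← hadef] at h7
    have hfin : ENNReal.ofReal (ρ ^ q) * BY.euclideanBallVol q *
        (ENNReal.ofReal ((2:ℝ) ^ r) * BY.euclideanBallVol r) ≠ ⊤ :=
      ENNReal.mul_ne_top (ENNReal.mul_ne_top ENNReal.ofReal_ne_top hωqtop)
        (ENNReal.mul_ne_top ENNReal.ofReal_ne_top hωrtop)
    have h8 : a.toReal ≤ ρ ^ q * (BY.euclideanBallVol q).toReal *
        ((2:ℝ) ^ r * (BY.euclideanBallVol r).toReal) := by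
      have h9 := ENNReal.toReal_mono hfin h7
      rwa [ENNReal.toReal_mul, ENNReal.toReal_mul, ENNReal.toReal_mul,
        ENNReal.toReal_ofReal (by positivity), ENNReal.toReal_ofReal (by positivity)] at h9
    calc a.toReal * BY.alphaAngle E F ^ q
        ≤ (ρ ^ q * (BY.euclideanBallVol q).toReal *
            ((2:ℝ) ^ r * (BY.euclideanBallVol r).toReal)) * BY.alphaAngle E F ^ q :=
          mul_le_mul_of_nonneg_right h8 (pow_nonneg hαEF0 q)
      _ = (ρ ^ q * BY.alphaAngle E F ^ q) *
            ((BY.euclideanBallVol q).toReal * ((2:ℝ) ^ r * (BY.euclideanBallVol r).toReal)) := by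
          ring
      _ = (BY.euclideanBallVol q).toReal * ((2:ℝ) ^ r * (BY.euclideanBallVol r).toReal) := by
          rw [hρα, one_mul]
  have hupa'R : a'.toReal * BY.alphaAngle E' F' ^ q ≤
      (BY.euclideanBallVol q).toReal * ((2:ℝ) ^ r * (BY.euclideanBallVol r).toReal) := by
    have h7 := S7.prod_upper E' F' μE' μF' ρ' hρ'0 hρ'cont
    rw [hIE'.2, hIF'.2, hE'q, hF'r, ← hS'def, ← ha'def] at h7
    have hfin : ENNReal.ofReal (ρ' ^ q) * BY.euclideanBallVol q *
        (ENNReal.ofReal ((2:ℝ) ^ r) * BY.euclideanBallVol r) ≠ ⊤ :=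
      ENNReal.mul_ne_top (ENNReal.mul_ne_top ENNReal.ofReal_ne_top hωqtop)
        (ENNReal.mul_ne_top ENNReal.ofReal_ne_top hωrtop)
    have h8 : a'.toReal ≤ ρ' ^ q * (BY.euclideanBallVol q).toReal *
        ((2:ℝ) ^ r * (BY.euclideanBallVol r).toReal) := by
      have h9 := ENNReal.toReal_mono hfin h7
      rwa [ENNReal.toReal_mul, ENNReal.toReal_mul, ENNReal.toReal_mul,
        ENNReal.toReal_ofReal (by positivity), ENNReal.toReal_ofReal (by positivity)] at h9
    calc a'.toReal * BY.alphaAngle E' F' ^ q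
        ≤ (ρ' ^ q * (BY.euclideanBallVol q).toReal *
            ((2:ℝ) ^ r * (BY.euclideanBallVol r).toReal)) * BY.alphaAngle E' F' ^ q :=
          mul_le_mul_of_nonneg_right h8 (pow_nonneg hαEF'0 q)
      _ = (ρ' ^ q * BY.alphaAngle E' F' ^ q) *
            ((BY.euclideanBallVol q).toReal * ((2:ℝ) ^ r * (BY.euclideanBallVol r).toReal)) := by
          ring
      _ = (BY.euclideanBallVol q).toReal * ((2:ℝ) ^ r * (BY.euclideanBallVol r).toReal) := by
          rw [hρ'α, one_mul]
  -- lower bounds (real)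
  have hlowaR : (2⁻¹:ℝ) ^ q * (BY.euclideanBallVol q).toReal *
      ((2⁻¹:ℝ) ^ r * (BY.euclideanBallVol r).toReal) ≤ a.toReal := by
    have h9 := ENNReal.toReal_mono haT hlowa
    rwa [ENNReal.toReal_mul, ENNReal.toReal_mul, ENNReal.toReal_mul,
      ENNReal.toReal_ofReal (by positivity), ENNReal.toReal_ofReal (by positivity)] at h9
  have hlowa'R : (2⁻¹:ℝ) ^ q * (BY.euclideanBallVol q).toReal *
      ((2⁻¹:ℝ) ^ r * (BY.euclideanBallVol r).toReal) ≤ a'.toReal := by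
    have h9 := ENNReal.toReal_mono ha'T hlowa'
    rwa [ENNReal.toReal_mul, ENNReal.toReal_mul, ENNReal.toReal_mul,
      ENNReal.toReal_ofReal (by positivity), ENNReal.toReal_ofReal (by positivity)] at h9
  -- numeric comparison
  have hqr : q + r = k := by omega
  have hnum : (BY.euclideanBallVol q).toReal * ((2:ℝ) ^ r * (BY.euclideanBallVol r).toReal) ≤
      (4:ℝ) ^ k * ((2⁻¹:ℝ) ^ q * (BY.euclideanBallVol q).toReal *
        ((2⁻¹:ℝ) ^ r * (BY.euclideanBallVol r).toReal)) := by
    have h2k : (2:ℝ) ^ k = 2 ^ q * 2 ^ r := by rw [← pow_add, hqr]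
    have h4k : (4:ℝ) ^ k = (2 ^ q * 2 ^ r) * ((2:ℝ) ^ q * 2 ^ r) := by
      rw [show (4:ℝ) = 2 * 2 by norm_num, mul_pow, ← h2k]
    have hq2 : (0:ℝ) < 2 ^ q := pow_pos two_pos q
    have hr2 : (0:ℝ) < 2 ^ r := pow_pos two_pos r
    have h2q1 : (1:ℝ) ≤ 2 ^ q := one_le_pow₀ one_le_two
    have key : (2:ℝ) ^ r ≤ 4 ^ k * ((2⁻¹:ℝ) ^ q * (2⁻¹:ℝ) ^ r) := by
      have hid : (4:ℝ) ^ k * ((2⁻¹:ℝ) ^ q * (2⁻¹:ℝ) ^ r) =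
          2 ^ q * 2 ^ r * (2 ^ q * 2 ^ r) * ((2 ^ q)⁻¹ * (2 ^ r)⁻¹) := by
        rw [inv_pow, inv_pow, h4k]; try ring
      have hid2 : (2:ℝ) ^ q * 2 ^ r * (2 ^ q * 2 ^ r) * ((2 ^ q)⁻¹ * (2 ^ r)⁻¹) =
          2 ^ q * 2 ^ r := by
        field_simp
      rw [hid, hid2]
      nlinarith
    calc (BY.euclideanBallVol q).toReal * ((2:ℝ) ^ r * (BY.euclideanBallVol r).toReal)
        = (2:ℝ) ^ r * ((BY.euclideanBallVol q).toReal * (BY.euclideanBallVol r).toReal) := by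
          ring
      _ ≤ ((4:ℝ) ^ k * ((2⁻¹:ℝ) ^ q * (2⁻¹:ℝ) ^ r)) *
            ((BY.euclideanBallVol q).toReal * (BY.euclideanBallVol r).toReal) := by
          apply mul_le_mul_of_nonneg_right key
          positivity
      _ = (4:ℝ) ^ k * ((2⁻¹:ℝ) ^ q * (BY.euclideanBallVol q).toReal *
            ((2⁻¹:ℝ) ^ r * (BY.euclideanBallVol r).toReal)) := by ring
  -- positivity of the alpha powers
  have hαq : 0 < BY.alphaAngle E F ^ q := by
    have hne : BY.alphaAngle E F ^ q ≠ 0 := by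
      intro h; rw [h, mul_zero] at hρα; exact zero_ne_one hρα
    exact (pow_nonneg hαEF0 q).lt_of_ne' hne
  have hα'q : 0 < BY.alphaAngle E' F' ^ q := by
    have hne : BY.alphaAngle E' F' ^ q ≠ 0 := by
      intro h; rw [h, mul_zero] at hρ'α; exact zero_ne_one hρ'α
    exact (pow_nonneg hαEF'0 q).lt_of_ne' hne
  constructor
  · -- lower inequality
    rw [hR, div_le_div_iff₀ (by positivity : (0:ℝ) < 4 ^ k) ha'R]
    calc BY.alphaAngle E' F' ^ q * a'.toReal
        = a'.toReal * BY.alphaAngle E' F' ^ q := by ring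
      _ ≤ (BY.euclideanBallVol q).toReal * ((2:ℝ) ^ r * (BY.euclideanBallVol r).toReal) :=
          hupa'R
      _ ≤ (4:ℝ) ^ k * ((2⁻¹:ℝ) ^ q * (BY.euclideanBallVol q).toReal *
            ((2⁻¹:ℝ) ^ r * (BY.euclideanBallVol r).toReal)) := hnum
      _ ≤ (4:ℝ) ^ k * a.toReal := by
          apply mul_le_mul_of_nonneg_left hlowaR
          positivity
      _ = a.toReal * 4 ^ k := by ring
  · -- upper inequality
    rw [hR, div_le_div_iff₀ ha'R hαq]
    calc a.toReal * BY.alphaAngle E F ^ q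
        ≤ (BY.euclideanBallVol q).toReal * ((2:ℝ) ^ r * (BY.euclideanBallVol r).toReal) :=
          hupaR
      _ ≤ (4:ℝ) ^ k * ((2⁻¹:ℝ) ^ q * (BY.euclideanBallVol q).toReal *
            ((2⁻¹:ℝ) ^ r * (BY.euclideanBallVol r).toReal)) := hnum
      _ ≤ (4:ℝ) ^ k * a'.toReal := by
          apply mul_le_mul_of_nonneg_left hlowa'R
          positivity
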